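/- Let G be a connected graph containing three pairwise twin vertices v1, v2, v3 (i.e., any two of them are twins). Then G has no m-resolving set, i.e., md(G) = ∞. -/
import Mathlib


open SimpleGraph

/-- The multiset of distances from `v` to the vertices of `W`. -/
noncomputable def mrep {V : Type*} (G : SimpleGraph V) (W : Finset V) (v : V) : Multiset ℕ :=
  W.val.map (fun w => G.dist v w)

/-- `W` is an m-resolving set of `G`: distinct vertices have distinct
representation multisets. -/
def IsMResolving {V : Type*} (G : SimpleGraph V) (W : Finset V) : Prop :=
  ∀ u v : V, u ≠ v → mrep G W u ≠ mrep G W v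

/-- The multiset dimension of `G`, equal to `⊤` if `G` has no m-resolving set. -/
noncomputable def mdim {V : Type*} (G : SimpleGraph V) : ℕ∞ :=
  ⨅ W : {W : Finset V // IsMResolving G W}, (W.1.card : ℕ∞)

/-- Two vertices are twins if they have the same neighbours apart from each other. -/
def Twins {V : Type*} (G : SimpleGraph V) (u v : V) : Prop :=
  G.neighborSet u \ {v} = G.neighborSet v \ {u}

lemma Twins.symm' {V : Type*} {G : SimpleGraph V} {u v : V} (h : Twins G u v) :
    Twins G v u := h.symm

lemma Twins.adj {V : Type*} {G : SimpleGraph V} {u v w : V} (h : Twins G u v)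
    (hw : w ≠ v) (ha : G.Adj u w) : G.Adj v w := by
  have hm : w ∈ G.neighborSet u \ {v} := ⟨ha, by simpa using hw⟩
  rw [h] at hm
  exact hm.1

lemma twins_dist_le {V : Type*} {G : SimpleGraph V} (hG : G.Connected) {u v x : V}
    (h : Twins G u v) (hxu : x ≠ u) : G.dist v x ≤ G.dist u x := by
  obtain ⟨p, hp⟩ := hG.exists_walk_length_eq_dist u x
  cases p with
  | nil => exact absurd rfl hxu.symm
  | @cons _ w _ ha q =>
    by_cases hw : w = v
    · subst hw
      calc G.dist w x ≤ q.length := SimpleGraph.dist_le q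
        _ ≤ (SimpleGraph.Walk.cons ha q).length := by simp [SimpleGraph.Walk.length_cons]
        _ = G.dist u x := hp
    · have ha' : G.Adj v w := h.adj hw ha
      calc G.dist v x ≤ (SimpleGraph.Walk.cons ha' q).length := SimpleGraph.dist_le _
        _ = (SimpleGraph.Walk.cons ha q).length := by simp [SimpleGraph.Walk.length_cons]
        _ = G.dist u x := hp

lemma twins_dist {V : Type*} {G : SimpleGraph V} (hG : G.Connected) {u v x : V}
    (h : Twins G u v) (hxu : x ≠ u) (hxv : x ≠ v) : G.dist u x = G.dist v x :=
  le_antisymm (twins_dist_le hG h.symm' hxv) (twins_dist_le hG h hxu)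

lemma mrep_eq {V : Type*} (G : SimpleGraph V) (hG : G.Connected) {u v : V} (W : Finset V)
    (huv : u ≠ v) (t : Twins G u v) (hmem : u ∈ W ↔ v ∈ W) :
    mrep G W u = mrep G W v := by
  classical
  by_cases hu : u ∈ W
  · have hv : v ∈ W := hmem.mp hu
    have hu' : u ∈ W.val := hu
    have hv' : v ∈ W.val.erase u := (Multiset.mem_erase_of_ne huv.symm).mpr hv
    set s := (W.val.erase u).erase v with hs
    have hWval : W.val = u ::ₘ v ::ₘ s := by
      rw [hs, Multiset.cons_erase hv', Multiset.cons_erase hu']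
    have hnd : (u ::ₘ v ::ₘ s).Nodup := hWval ▸ W.nodup
    have hus : u ∉ v ::ₘ s := (Multiset.nodup_cons.mp hnd).1
    have hvs : v ∉ s := (Multiset.nodup_cons.mp (Multiset.nodup_cons.mp hnd).2).1
    have hmap : s.map (fun w => G.dist u w) = s.map (fun w => G.dist v w) := by
      apply Multiset.map_congr rfl
      intro w hw
      have hwu : w ≠ u := fun e => hus (e ▸ Multiset.mem_cons_of_mem hw)
      have hwv : w ≠ v := fun e => hvs (e ▸ hw)
      exact twins_dist hG t hwu hwv
    unfold mrep
    rw [hWval]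
    simp only [Multiset.map_cons]
    rw [hmap, SimpleGraph.dist_self, SimpleGraph.dist_self,
      SimpleGraph.dist_comm (u := v) (v := u), Multiset.cons_swap]
  · have hv : v ∉ W := fun h => hu (hmem.mpr h)
    unfold mrep
    apply Multiset.map_congr rfl
    intro w hw
    have hwu : w ≠ u := fun e => hu (e ▸ hw)
    have hwv : w ≠ v := fun e => hv (e ▸ hw)
    exact twins_dist hG t hwu hwv

theorem stmt_9 {V : Type*} (G : SimpleGraph V) (hG : G.Connected) (v₁ v₂ v₃ : V)
    (h12 : v₁ ≠ v₂) (h13 : v₁ ≠ v₃) (h23 : v₂ ≠ v₃)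
    (t12 : Twins G v₁ v₂) (t13 : Twins G v₁ v₃) (t23 : Twins G v₂ v₃) :
    (∀ W : Finset V, ¬ IsMResolving G W) ∧ mdim G = ⊤ := by
  have hall : ∀ W : Finset V, ¬ IsMResolving G W := by
    intro W hW
    by_cases h1 : v₁ ∈ W <;> by_cases h2 : v₂ ∈ W <;> by_cases h3 : v₃ ∈ W
    · exact hW v₁ v₂ h12 (mrep_eq G hG W h12 t12 (iff_of_true h1 h2))
    · exact hW v₁ v₂ h12 (mrep_eq G hG W h12 t12 (iff_of_true h1 h2))
    · exact hW v₁ v₃ h13 (mrep_eq G hG W h13 t13 (iff_of_true h1 h3))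
    · exact hW v₂ v₃ h23 (mrep_eq G hG W h23 t23 (iff_of_false h2 h3))
    · exact hW v₂ v₃ h23 (mrep_eq G hG W h23 t23 (iff_of_true h2 h3))
    · exact hW v₁ v₃ h13 (mrep_eq G hG W h13 t13 (iff_of_false h1 h3))
    · exact hW v₁ v₂ h12 (mrep_eq G hG W h12 t12 (iff_of_false h1 h2))
    · exact hW v₁ v₂ h12 (mrep_eq G hG W h12 t12 (iff_of_false h1 h2))
  refine ⟨hall, ?_⟩
  have : IsEmpty {W : Finset V // IsMResolving G W} := ⟨fun ⟨W, hW⟩ => hall W hW⟩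
  rw [mdim]
  exact iInf_of_empty _
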